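/- For all r ≥ 0 one has ψ₁(r) ≤ (2/√(c-ε)) · ∫₀^r e^{ε s²/2} / (√(2+(c-ε)s²) + √(c-ε)·s) ds. -/

import Mathlib

open MeasureTheory Real Filter

/-- `ψ₁ c ε r = ∫₀^r e^{c s²/2} (∫_s^∞ e^{-(c-ε) u²/2} du) ds`. -/
noncomputable def psi1 (c ε r : ℝ) : ℝ :=
  ∫ s in (0:ℝ)..r, Real.exp (c * s ^ 2 / 2) * ∫ u in Set.Ioi s, Real.exp (-(c - ε) * u ^ 2 / 2)

section aux

variable {a : ℝ}

private lemma sqpos (ha : 0 < a) (t : ℝ) : (0:ℝ) < 2 + a * t ^ 2 := by positivity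

/-- key algebraic fact: √a * t * √(2+a t²) ≤ a t² + 1 for t ≥ 0. -/
private lemma key_alg (ha : 0 < a) {t : ℝ} (ht : 0 ≤ t) :
    Real.sqrt a * t * Real.sqrt (2 + a * t ^ 2) ≤ a * t ^ 2 + 1 := by
  have h1 : Real.sqrt a * t = Real.sqrt (a * t ^ 2) := by
    rw [Real.sqrt_mul ha.le, Real.sqrt_sq ht]
  have h2 : Real.sqrt a * t * Real.sqrt (2 + a * t ^ 2)
      = Real.sqrt (a * t ^ 2 * (2 + a * t ^ 2)) := by
    rw [h1, ← Real.sqrt_mul (by positivity)]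
  have h3 : Real.sqrt (a * t ^ 2 * (2 + a * t ^ 2)) ≤ Real.sqrt ((a * t ^ 2 + 1) ^ 2) :=
    Real.sqrt_le_sqrt (by nlinarith)
  rw [Real.sqrt_sq (by positivity)] at h3
  linarith [h2 ▸ h3]

/-- the comparison function -/
private noncomputable def hfun (a t : ℝ) : ℝ :=
  (Real.sqrt (2 + a * t ^ 2) - Real.sqrt a * t) * Real.exp (-a * t ^ 2 / 2) / Real.sqrt a

private noncomputable def hder (a t : ℝ) : ℝ :=
  ((2 * a * t / (2 * Real.sqrt (2 + a * t ^ 2)) - Real.sqrt a) * Real.exp (-a * t ^ 2 / 2)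
    + (Real.sqrt (2 + a * t ^ 2) - Real.sqrt a * t)
      * (Real.exp (-a * t ^ 2 / 2) * (-a * t))) / Real.sqrt a

private lemma hfun_hasDeriv (ha : 0 < a) (t : ℝ) : HasDerivAt (hfun a) (hder a t) t := by
  have hsq : HasDerivAt (fun x : ℝ => 2 + a * x ^ 2) (2 * a * t) t := by
    have := ((hasDerivAt_pow 2 t).const_mul a).const_add 2
    exact this.congr_deriv (by rw [show (2:ℕ) - 1 = 1 from rfl, pow_one]; push_cast; ring)
  have hS : HasDerivAt (fun x : ℝ => Real.sqrt (2 + a * x ^ 2))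
      (2 * a * t / (2 * Real.sqrt (2 + a * t ^ 2))) t := hsq.sqrt (ne_of_gt (sqpos ha t))
  have hT : HasDerivAt (fun x : ℝ => Real.sqrt a * x) (Real.sqrt a) t := by
    simpa using (hasDerivAt_id t).const_mul (Real.sqrt a)
  have hin : HasDerivAt (fun x : ℝ => -a * x ^ 2 / 2) (-a * t) t := by
    have := ((hasDerivAt_pow 2 t).const_mul (-a)).div_const 2
    exact this.congr_deriv (by rw [show (2:ℕ) - 1 = 1 from rfl, pow_one]; push_cast; ring)
  have hE : HasDerivAt (fun x : ℝ => Real.exp (-a * x ^ 2 / 2))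
      (Real.exp (-a * t ^ 2 / 2) * (-a * t)) t := hin.exp
  exact ((hS.sub hT).mul hE).div_const (Real.sqrt a)

/-- the derivative bound : hder ≤ -exp for t > 0 -/
private lemma hder_le (ha : 0 < a) {t : ℝ} (ht : 0 < t) :
    Real.exp (-a * t ^ 2 / 2) ≤ -(hder a t) := by
  set S := Real.sqrt (2 + a * t ^ 2) with hSdef
  set T := Real.sqrt a with hTdef
  set E := Real.exp (-a * t ^ 2 / 2) with hEdef
  have hS2 : S ^ 2 = 2 + a * t ^ 2 := Real.sq_sqrt (sqpos ha t).le
  have hSpos : 0 < S := Real.sqrt_pos.2 (sqpos ha t)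
  have hTpos : 0 < T := Real.sqrt_pos.2 ha
  have hEpos : 0 < E := Real.exp_pos _
  have hkey : T * t * S ≤ a * t ^ 2 + 1 := key_alg ha ht.le
  rw [le_neg]
  rw [hder, div_le_iff₀ hTpos]
  have hX : (2 * a * t / (2 * S) - T) * E + (S - T * t) * (E * (-a * t))
      = E * a * t / S - E * T - E * a * t * S + E * T * a * t ^ 2 := by
    field_simp
    ring
  rw [hX]
  have h5 : E * a * t / S ≤ E * a * t * S - E * T * a * t ^ 2 := by
    rw [div_le_iff₀ hSpos]
    have h6 := mul_le_mul_of_nonneg_left hkey (show (0:ℝ) ≤ E * a * t by positivity)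
    have h7 : E * a * t * S ^ 2 = E * a * t * (2 + a * t ^ 2) := by rw [hS2]
    nlinarith [h6, h7]
  nlinarith [h5]

private lemma hfun_nonneg (ha : 0 < a) {t : ℝ} (ht : 0 ≤ t) : 0 ≤ hfun a t := by
  have h1 : Real.sqrt a * t = Real.sqrt (a * t ^ 2) := by
    rw [Real.sqrt_mul ha.le, Real.sqrt_sq ht]
  have h2 : Real.sqrt (a * t ^ 2) ≤ Real.sqrt (2 + a * t ^ 2) :=
    Real.sqrt_le_sqrt (by linarith)
  have := Real.exp_pos (-a * t ^ 2 / 2)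
  have := Real.sqrt_pos.2 ha
  apply div_nonneg _ (Real.sqrt_nonneg a)
  apply mul_nonneg _ (Real.exp_pos _).le
  rw [h1]; linarith

private lemma hfun_le (ha : 0 < a) {t : ℝ} (ht : 0 ≤ t) :
    hfun a t ≤ Real.sqrt 2 * Real.exp (-a * t ^ 2 / 2) / Real.sqrt a := by
  have h2 : Real.sqrt (2 + a * t ^ 2) ≤ Real.sqrt 2 + Real.sqrt a * t := by
    have := Real.sqrt_le_sqrt (show 2 + a * t ^ 2 ≤ (Real.sqrt 2 + Real.sqrt a * t) ^ 2 by
      nlinarith [Real.sq_sqrt (show (0:ℝ) ≤ 2 by norm_num), Real.sq_sqrt ha.le,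
        mul_nonneg (mul_nonneg (Real.sqrt_nonneg 2) (Real.sqrt_nonneg a)) ht])
    rwa [Real.sqrt_sq (by positivity)] at this
  rw [hfun]
  apply div_le_div_of_nonneg_right _ (Real.sqrt_nonneg a)
  apply mul_le_mul_of_nonneg_right _ (Real.exp_pos _).le
  linarith

private lemma hfun_tendsto (ha : 0 < a) : Tendsto (hfun a) atTop (nhds 0) := by
  have hsq : Tendsto (fun t : ℝ => a / 2 * t ^ 2) atTop atTop :=
    (tendsto_pow_atTop (two_ne_zero)).const_mul_atTop (by positivity)
  have hbot : Tendsto (fun t : ℝ => -a * t ^ 2 / 2) atTop atBot := by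
    have := tendsto_neg_atTop_atBot.comp hsq
    apply this.congr
    intro t; simp [Function.comp]; ring
  have hexp : Tendsto (fun t : ℝ => Real.exp (-a * t ^ 2 / 2)) atTop (nhds 0) :=
    Real.tendsto_exp_atBot.comp hbot
  have hbound : Tendsto (fun t : ℝ => Real.sqrt 2 * Real.exp (-a * t ^ 2 / 2) / Real.sqrt a)
      atTop (nhds 0) := by
    have := (hexp.const_mul (Real.sqrt 2)).div_const (Real.sqrt a)
    simpa using this
  apply squeeze_zero' _ _ hbound
  · filter_upwards [eventually_ge_atTop (0:ℝ)] with t ht using hfun_nonneg ha ht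
  · filter_upwards [eventually_ge_atTop (0:ℝ)] with t ht using hfun_le ha ht

/-- Komatsu-type Gaussian tail bound. -/
private lemma tail_le (ha : 0 < a) {x : ℝ} (hx : 0 ≤ x) :
    ∫ u in Set.Ioi x, Real.exp (-a * u ^ 2 / 2) ≤ hfun a x := by
  have hderiv : ∀ t ∈ Set.Ici x, HasDerivAt (fun t => -(hfun a t)) (-(hder a t)) t :=
    fun t _ => (hfun_hasDeriv ha t).neg
  have hpos : ∀ t ∈ Set.Ioi x, 0 ≤ -(hder a t) := fun t ht =>
    le_trans (Real.exp_pos _).le (hder_le ha (lt_of_le_of_lt hx ht))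
  have htend : Tendsto (fun t => -(hfun a t)) atTop (nhds 0) := by
    simpa using (hfun_tendsto ha).neg
  have hint := integrableOn_Ioi_deriv_of_nonneg' hderiv hpos htend
  have heq := integral_Ioi_of_hasDerivAt_of_nonneg' hderiv hpos htend
  have hgauss : Integrable (fun u : ℝ => Real.exp (-a * u ^ 2 / 2)) := by
    have h := integrable_exp_neg_mul_sq (show (0:ℝ) < a / 2 by positivity)
    apply h.congr
    filter_upwards with u
    ring_nf
  calc ∫ u in Set.Ioi x, Real.exp (-a * u ^ 2 / 2)
      ≤ ∫ u in Set.Ioi x, -(hder a u) := by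
        apply setIntegral_mono_on hgauss.integrableOn hint measurableSet_Ioi
        intro u hu
        exact hder_le ha (lt_of_le_of_lt hx hu)
    _ = 0 - -(hfun a x) := heq
    _ = hfun a x := by ring

private lemma tail_nonneg (a x : ℝ) :
    0 ≤ ∫ u in Set.Ioi x, Real.exp (-a * u ^ 2 / 2) :=
  setIntegral_nonneg measurableSet_Ioi fun u _ => (Real.exp_pos _).le

private lemma tail_antitone (ha : 0 < a) :
    Antitone (fun s : ℝ => ∫ u in Set.Ioi s, Real.exp (-a * u ^ 2 / 2)) := by
  intro s1 s2 h12
  have hgauss : Integrable (fun u : ℝ => Real.exp (-a * u ^ 2 / 2)) := by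
    have h := integrable_exp_neg_mul_sq (show (0:ℝ) < a / 2 by positivity)
    apply h.congr
    filter_upwards with u
    ring_nf
  apply setIntegral_mono_set hgauss.integrableOn
  · filter_upwards with u using (Real.exp_pos _).le
  · exact HasSubset.Subset.eventuallyLE (Set.Ioi_subset_Ioi h12)

end aux

theorem stmt_4 (c ε : ℝ) (hε : 0 < ε) (hεc : ε < c) :
    ∀ r : ℝ, 0 ≤ r →
      psi1 c ε r ≤ (2 / Real.sqrt (c - ε)) *
        ∫ s in (0:ℝ)..r,
          Real.exp (ε * s ^ 2 / 2) / (Real.sqrt (2 + (c - ε) * s ^ 2) + Real.sqrt (c - ε) * s) := by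
  intro r hr
  set a := c - ε with ha'
  have ha : 0 < a := by simp [ha']; linarith
  rw [psi1, ← intervalIntegral.integral_const_mul]
  -- pointwise bound
  have hpt : ∀ s ∈ Set.Icc (0:ℝ) r,
      Real.exp (c * s ^ 2 / 2) * ∫ u in Set.Ioi s, Real.exp (-a * u ^ 2 / 2) ≤
      2 / Real.sqrt a * (Real.exp (ε * s ^ 2 / 2)
        / (Real.sqrt (2 + a * s ^ 2) + Real.sqrt a * s)) := by
    intro s hs
    have hs0 : 0 ≤ s := hs.1
    have step1 : Real.exp (c * s ^ 2 / 2) * ∫ u in Set.Ioi s, Real.exp (-a * u ^ 2 / 2)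
        ≤ Real.exp (c * s ^ 2 / 2) * hfun a s :=
      mul_le_mul_of_nonneg_left (tail_le ha hs0) (Real.exp_pos _).le
    refine step1.trans_eq ?_
    set S := Real.sqrt (2 + a * s ^ 2) with hSdef
    set T := Real.sqrt a with hTdef
    have hS2 : S ^ 2 = 2 + a * s ^ 2 := Real.sq_sqrt (sqpos ha s).le
    have hT2 : T ^ 2 = a := Real.sq_sqrt ha.le
    have hSpos : 0 < S := Real.sqrt_pos.2 (sqpos ha s)
    have hTpos : 0 < T := Real.sqrt_pos.2 ha
    have hSTpos : 0 < S + T * s := by positivity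
    have hexp : Real.exp (c * s ^ 2 / 2) * Real.exp (-a * s ^ 2 / 2)
        = Real.exp (ε * s ^ 2 / 2) := by
      rw [← Real.exp_add]
      congr 1
      rw [ha']; ring
    have hST : (S - T * s) * (S + T * s) = 2 := by nlinarith [hS2, hT2]
    rw [hfun, ← hSdef, ← hTdef]
    rw [← hexp]
    field_simp
    linear_combination hST
  -- integrability of RHS
  have hcont : Continuous (fun s : ℝ => Real.exp (ε * s ^ 2 / 2)
      / (Real.sqrt (2 + a * s ^ 2) + Real.sqrt a * s)) := by
    apply Continuous.div
    · exact Real.continuous_exp.comp (by continuity)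
    · exact (Real.continuous_sqrt.comp (by continuity)).add (continuous_const.mul continuous_id)
    · intro s
      have hS2 : Real.sqrt (2 + a * s ^ 2) ^ 2 = 2 + a * s ^ 2 := Real.sq_sqrt (sqpos ha s).le
      have hT2 : Real.sqrt a ^ 2 = a := Real.sq_sqrt ha.le
      have hSpos : 0 < Real.sqrt (2 + a * s ^ 2) := Real.sqrt_pos.2 (sqpos ha s)
      have : Real.sqrt a * |s| ≤ Real.sqrt (2 + a * s ^ 2) := by
        nlinarith [abs_nonneg s, sq_abs s, Real.sqrt_nonneg a,
          sq_nonneg (Real.sqrt (2 + a * s ^ 2) - Real.sqrt a * |s|)]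
      have habs := neg_abs_le s
      have : 0 < Real.sqrt (2 + a * s ^ 2) + Real.sqrt a * s := by
        nlinarith [Real.sqrt_nonneg a, abs_nonneg s]
      exact this.ne'
  have hg_int : IntervalIntegrable (fun s : ℝ => 2 / Real.sqrt a *
      (Real.exp (ε * s ^ 2 / 2) / (Real.sqrt (2 + a * s ^ 2) + Real.sqrt a * s))) volume 0 r :=
    (continuous_const.mul hcont).intervalIntegrable 0 r
  -- integrability of LHS
  have hf_meas : Measurable (fun s : ℝ =>
      Real.exp (c * s ^ 2 / 2) * ∫ u in Set.Ioi s, Real.exp (-a * u ^ 2 / 2)) := by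
    exact (Real.continuous_exp.comp (by continuity)).measurable.mul (tail_antitone ha).measurable
  have hf_int : IntervalIntegrable (fun s : ℝ =>
      Real.exp (c * s ^ 2 / 2) * ∫ u in Set.Ioi s, Real.exp (-a * u ^ 2 / 2)) volume 0 r := by
    rw [intervalIntegrable_iff_integrableOn_Icc_of_le hr]
    rw [intervalIntegrable_iff_integrableOn_Icc_of_le hr] at hg_int
    apply MeasureTheory.Integrable.mono hg_int hf_meas.aestronglyMeasurable
    apply (ae_restrict_iff' measurableSet_Icc).2
    filter_upwards with s hs
    have h1 := hpt s hs
    have h2 : 0 ≤ Real.exp (c * s ^ 2 / 2) * ∫ u in Set.Ioi s, Real.exp (-a * u ^ 2 / 2) :=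
      mul_nonneg (Real.exp_pos _).le (tail_nonneg a s)
    rw [Real.norm_eq_abs, Real.norm_eq_abs, abs_of_nonneg h2, abs_of_nonneg (le_trans h2 h1)]
    exact h1
  exact intervalIntegral.integral_mono_on hr hf_int hg_int hpt
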